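/- The recalibrated prediction is auto-calibrated: Let Y be a target random variable taking values in a measurable space and Q a random probability measure on the target space jointly distributed with Y. Define the recalibrated prediction Q̃ = P_{Y|Q}, a regular conditional distribution of Y given Q. Then Q̃ is auto-calibrated: P_{Y|Q̃} = Q̃ almost surely. -/

import Mathlib

open MeasureTheory ProbabilityTheory

noncomputable section

/-- **The recalibrated prediction is auto-calibrated.**
Let `Y` be a target random variable taking values in a standard Borel space and `Q` a random
probability measure on the target space jointly distributed with `Y`. Define the recalibrated
prediction `Q̃ = P_{Y|Q}` (a regular conditional distribution of `Y` given `Q`, evaluated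
along `Q`). Then `Q̃` is auto-calibrated: `P_{Y|Q̃} = Q̃` almost surely. -/
theorem recalibrated_prediction_is_auto_calibrated
    {Ω 𝒴 : Type*} [MeasurableSpace Ω]
    [MeasurableSpace 𝒴] [StandardBorelSpace 𝒴] [Nonempty 𝒴]
    (μ : Measure Ω) [IsProbabilityMeasure μ]
    (Y : Ω → 𝒴) (Q : Ω → Measure 𝒴)
    (hY : Measurable Y) (hQ : Measurable Q)
    (hQprob : ∀ ω, IsProbabilityMeasure (Q ω))
    (Qt : Ω → Measure 𝒴)
    (hQt : ∀ ω, Qt ω = condDistrib Y Q μ (Q ω)) :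
    ∀ᵐ ω ∂μ, condDistrib Y Qt μ (Qt ω) = Qt ω := by
  classical
  have hQtfun : Qt = fun ω => condDistrib Y Q μ (Q ω) := funext hQt
  have hQt_meas : Measurable Qt := by
    rw [hQtfun]
    exact (Kernel.measurable (condDistrib Y Q μ)).comp hQ
  -- each Qt ω is a probability measure
  have hQt_prob : ∀ ω, IsProbabilityMeasure (Qt ω) := fun ω => by
    rw [hQt ω]; infer_instance
  -- the "identity" kernel on probability measures
  let P : Set (Measure 𝒴) := {m | m Set.univ = 1}
  have hP : MeasurableSet P := (Measure.measurable_coe MeasurableSet.univ) (measurableSet_singleton 1)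
  let κ : Kernel (Measure 𝒴) 𝒴 :=
    ⟨P.piecewise id (fun _ => Measure.dirac Classical.ofNonempty),
      Measurable.piecewise hP measurable_id measurable_const⟩
  have hκ_apply : ∀ m : Measure 𝒴, IsProbabilityMeasure m → κ m = m := by
    intro m hm
    have : m ∈ P := hm.measure_univ
    simp only [κ, Kernel.coe_mk, Set.piecewise_eq_of_mem _ _ _ this, id]
  haveI : IsMarkovKernel κ := by
    constructor
    intro m
    by_cases hm : m ∈ P
    · constructor
      simp only [κ, Kernel.coe_mk, Set.piecewise_eq_of_mem _ _ _ hm, id]; exact hm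
    · constructor
      simp only [κ, Kernel.coe_mk, Set.piecewise_eq_of_notMem _ _ _ hm]
      simp
  haveI : IsProbabilityMeasure (μ.map Qt) := Measure.isProbabilityMeasure_map hQt_meas.aemeasurable
  -- the disintegration property for κ along Qt
  have hcomp : μ.map (fun x => (Qt x, Y x)) = μ.map Qt ⊗ₘ κ := by
    refine ext_of_generate_finite _ generateFrom_prod.symm isPiSystem_prod ?_ ?_
    · rintro s ⟨A, hA, B, hB, rfl⟩
      simp only [Set.mem_setOf_eq] at hA hB
      rw [Measure.compProd_apply_prod hA hB,
        Measure.map_apply (hQt_meas.prodMk hY) (hA.prod hB),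
        setLIntegral_map hA (Kernel.measurable_coe κ hB) hQt_meas]
      have h1 : ∀ ω, κ (Qt ω) B = Qt ω B := fun ω => by
        rw [hκ_apply (Qt ω) (hQt_prob ω)]
      simp_rw [h1]
      have hpre : Qt ⁻¹' A = Q ⁻¹' ((fun m => condDistrib Y Q μ m) ⁻¹' A) := by
        rw [hQtfun]; rfl
      have hS : MeasurableSet ((fun m => condDistrib Y Q μ m) ⁻¹' A) :=
        (Kernel.measurable (condDistrib Y Q μ)) hA
      rw [Set.mk_preimage_prod, hpre]
      simp_rw [hQt]
      exact (setLIntegral_preimage_condDistrib hQ hY.aemeasurable hB hS).symm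
    · rw [Measure.map_apply (hQt_meas.prodMk hY) MeasurableSet.univ]
      simp
  have hae := condDistrib_ae_eq_of_measure_eq_compProd Qt hY.aemeasurable hcomp
  have hae' : ∀ᵐ ω ∂μ, κ (Qt ω) = condDistrib Y Qt μ (Qt ω) :=
    ae_of_ae_map hQt_meas.aemeasurable hae.symm
  filter_upwards [hae'] with ω hω
  rw [← hω, hκ_apply (Qt ω) (hQt_prob ω)]
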